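/- The ordinal rank of the lattice of marked quotients of (ℤ², ((1,0),(0,1))) is ω·2 + 1. -/

import Mathlib

/-- Marked quotients of `(ℤ², ((1,0),(0,1)))` correspond to the subgroups of `ℤ²` (their
kernels), the marked-quotient order corresponding to reverse inclusion of kernels; this
order is well-founded since `ℤ²` is Noetherian. -/
instance : WellFoundedGT (AddSubgroup (ℤ × ℤ)) :=
  (AddSubgroup.toIntSubmodule : AddSubgroup (ℤ × ℤ) ≃o Submodule ℤ (ℤ × ℤ))
    |>.strictMono.wellFoundedGT

open AddSubgroup IsWellFounded

namespace MQZ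


/-- Number of prime factors with multiplicity. -/
def Om (n : ℕ) : ℕ := n.primeFactorsList.length

lemma Om_mul {a b : ℕ} (ha : a ≠ 0) (hb : b ≠ 0) : Om (a * b) = Om a + Om b := by
  unfold Om
  rw [(Nat.perm_primeFactorsList_mul ha hb).length_eq, List.length_append]

lemma Om_pos {a : ℕ} (ha : 2 ≤ a) : 0 < Om a := by
  obtain ⟨p, hp, hpd⟩ := Nat.exists_prime_and_dvd (by omega : a ≠ 1)
  have : p ∈ a.primeFactorsList := (Nat.mem_primeFactorsList (by omega)).mpr ⟨hp, hpd⟩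
  have := List.length_pos_of_mem this
  simpa [Om] using this

/-- Helper: bound the rank from above. -/
lemma rank_le_of {N : AddSubgroup (ℤ × ℤ)} {c : Ordinal}
    (h : ∀ M : AddSubgroup (ℤ × ℤ), N < M → rank (α := AddSubgroup (ℤ × ℤ)) (· > ·) M < c) :
    rank (α := AddSubgroup (ℤ × ℤ)) (· > ·) N ≤ c := by
  rw [IsWellFounded.rank_eq]
  exact Ordinal.iSup_le fun ⟨M, hM⟩ => Order.succ_le_of_lt (h M hM)

lemma rank_le_index : ∀ n : ℕ, ∀ N : AddSubgroup (ℤ × ℤ), N.index ≠ 0 → Om N.index < n →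
    rank (α := AddSubgroup (ℤ × ℤ)) (· > ·) N ≤ (Om N.index : Ordinal) := by
  intro n
  induction n with
  | zero => intro N _ h; omega
  | succ n ih =>
    intro N hN hn
    apply rank_le_of
    intro M hM
    have hdvd : M.index ∣ N.index := AddSubgroup.index_dvd_of_le hM.le
    have hMi : M.index ≠ 0 := fun h => hN (zero_dvd_iff.mp (h ▸ hdvd))
    have hrel : N.relIndex M * M.index = N.index := AddSubgroup.relIndex_mul_index hM.le
    have hrel0 : N.relIndex M ≠ 0 := by
      intro h; rw [h, zero_mul] at hrel; exact hN hrel.symm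
    have hrel1 : N.relIndex M ≠ 1 := by
      intro h
      exact hM.not_ge (AddSubgroup.relIndex_eq_one.mp h)
    have hlt : Om M.index < Om N.index := by
      rw [← hrel, Om_mul hrel0 hMi]
      have := Om_pos (a := N.relIndex M) (by omega)
      omega
    calc rank (α := AddSubgroup (ℤ × ℤ)) (· > ·) M ≤ (Om M.index : Ordinal) :=
          ih M hMi (by omega)
      _ < (Om N.index : Ordinal) := by exact_mod_cast hlt



lemma smul_coords (k : ℤ) (x : ℤ × ℤ) : k • x = (k * x.1, k * x.2) := by
  ext <;> simp

lemma classify (N : AddSubgroup (ℤ × ℤ)) :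
    N = ⊥ ∨ N.index ≠ 0 ∨ ∃ v : ℤ × ℤ, v ≠ 0 ∧ N = zmultiples v := by
  by_cases hbot : N = ⊥
  · exact Or.inl hbot
  obtain ⟨v, hvN, hv⟩ : ∃ v ∈ N, v ≠ 0 := by
    by_contra h
    push_neg at h
    exact hbot ((AddSubgroup.eq_bot_iff_forall N).mpr h)
  by_cases hdet : ∃ w ∈ N, v.1 * w.2 - v.2 * w.1 ≠ 0
  · -- finite index
    obtain ⟨w, hwN, hd⟩ := hdet
    set d : ℤ := v.1 * w.2 - v.2 * w.1 with hd_def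
    refine Or.inr (Or.inl ?_)
    have key : ∀ z : ℤ × ℤ, d • z ∈ N := by
      intro z
      have : d • z = (z.1 * w.2 - z.2 * w.1) • v + (v.1 * z.2 - v.2 * z.1) • w := by
        rw [smul_coords, smul_coords, smul_coords]
        ext <;> simp only [Prod.fst_add, Prod.snd_add] <;> rw [hd_def] <;> ring
      rw [this]
      exact add_mem (zsmul_mem hvN _) (zsmul_mem hwN _)
    have hK : (zmultiples d).prod (zmultiples d) ≤ N := by
      rintro ⟨x, y⟩ hxy
      rw [AddSubgroup.mem_prod] at hxy
      obtain ⟨⟨a, ha⟩, ⟨b, hb⟩⟩ := hxy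
      simp only [smul_eq_mul] at ha hb
      have : (x, y) = d • ((a : ℤ), (b : ℤ)) := by
        rw [smul_coords]
        simp only [Prod.mk.injEq]
        constructor <;> [rw [← ha]; rw [← hb]] <;> ring
      rw [this]
      exact key _
    have hKi : ((zmultiples d).prod (zmultiples d)).index ≠ 0 := by
      rw [AddSubgroup.index_prod, Int.index_zmultiples]
      have : d.natAbs ≠ 0 := Int.natAbs_ne_zero.mpr hd
      positivity
    intro h0
    exact hKi (Nat.eq_zero_of_zero_dvd (h0 ▸ AddSubgroup.index_dvd_of_le hK))
  · -- rank one
    push_neg at hdet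
    simp only [sub_eq_zero] at hdet
    refine Or.inr (Or.inr ?_)
    set g : ℤ := (Int.gcd v.1 v.2 : ℤ) with hg_def
    have hgnat : Int.gcd v.1 v.2 ≠ 0 := by
      rw [ne_eq, Int.gcd_eq_zero_iff]
      intro ⟨h1, h2⟩; exact hv (Prod.ext h1 h2)
    have hg0 : g ≠ 0 := by
      rw [hg_def, ne_eq, Int.natCast_eq_zero]; exact hgnat
    set p : ℤ × ℤ := (v.1 / g, v.2 / g) with hp_def
    have hcop : Int.gcd p.1 p.2 = 1 :=
      Int.gcd_div_gcd_div_gcd (Nat.pos_of_ne_zero hgnat)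
    have hv1 : v.1 = g * p.1 := (Int.mul_ediv_cancel' (Int.gcd_dvd_left _ _)).symm
    have hv2 : v.2 = g * p.2 := (Int.mul_ediv_cancel' (Int.gcd_dvd_right _ _)).symm
    have hkey : ∀ w ∈ N, ∃ k : ℤ, w = k • p := by
      intro w hwN
      have h1 : v.1 * w.2 = v.2 * w.1 := hdet w hwN
      have h2 : p.1 * w.2 = p.2 * w.1 := by
        rw [hv1, hv2] at h1
        exact mul_left_cancel₀ hg0 (by linarith)
      by_cases ha : p.1 = 0
      · have hb1 : p.2 = 1 ∨ p.2 = -1 := by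
          have hn : p.2.natAbs = 1 := by
            rw [ha] at hcop; simpa [Int.gcd] using hcop
          rcases Int.natAbs_eq p.2 with h | h <;> omega
        have hw1 : w.1 = 0 := by
          rcases hb1 with h | h <;> rw [ha, h] at h2 <;> omega
        refine ⟨p.2 * w.2, ?_⟩
        rw [smul_coords, ha]
        refine Prod.ext ?_ ?_
        · rw [hw1]; ring
        · show w.2 = p.2 * w.2 * p.2
          rcases hb1 with h | h <;> rw [h] <;> ring
      · have hdvd : p.1 ∣ w.1 := by
          have : p.1 ∣ p.2 * w.1 := ⟨w.2, by linarith⟩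
          exact Int.dvd_of_dvd_mul_right_of_gcd_one this hcop
        obtain ⟨k, hk⟩ := hdvd
        refine ⟨k, ?_⟩
        have hw2 : w.2 = k * p.2 := by
          have : p.1 * w.2 = p.1 * (k * p.2) := by rw [h2, hk]; ring
          exact mul_left_cancel₀ ha this
        rw [smul_coords]
        ext
        · rw [hk]; ring_nf
        · rw [hw2]
    set f : ℤ →+ ℤ × ℤ := zmultiplesHom (ℤ × ℤ) p with hf
    obtain ⟨a, ha⟩ := Int.subgroup_cyclic (AddSubgroup.comap f N)
    refine ⟨a • p, ?_, ?_⟩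
    · intro h
      apply hbot
      rw [eq_bot_iff]
      intro w hw
      obtain ⟨k, hk⟩ := hkey w hw
      have hkf : k ∈ AddSubgroup.comap f N := by
        simp only [AddSubgroup.mem_comap, hf, zmultiplesHom_apply]
        rw [← hk]; exact hw
      rw [ha, AddSubgroup.mem_closure_singleton] at hkf
      obtain ⟨m, hm⟩ := hkf
      have hk2 : m * a = k := by simpa using hm
      have : w = m • (a • p) := by rw [smul_smul, hk2, ← hk]
      rw [AddSubgroup.mem_bot, this, h, smul_zero]
    · apply le_antisymm
      · intro w hw
        obtain ⟨k, hk⟩ := hkey w hw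
        have hkf : k ∈ AddSubgroup.comap f N := by
          simp only [AddSubgroup.mem_comap, hf, zmultiplesHom_apply]
          rw [← hk]; exact hw
        rw [ha, AddSubgroup.mem_closure_singleton] at hkf
        obtain ⟨m, hm⟩ := hkf
        have hk2 : m * a = k := by simpa using hm
        exact ⟨m, by show m • (a • p) = w; rw [smul_smul, hk2, hk]⟩
      · apply AddSubgroup.zmultiples_le_of_mem
        have haf : a ∈ AddSubgroup.comap f N := by
          rw [ha]; exact AddSubgroup.mem_closure_singleton.mpr ⟨1, one_smul _ a⟩
        simpa [hf] using haf



local notation "rk" => rank (α := AddSubgroup (ℤ × ℤ)) (· > ·)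

lemma zmultiples_neg (v : ℤ × ℤ) : zmultiples (-v) = zmultiples v := by
  apply le_antisymm
  · rintro x ⟨k, rfl⟩
    exact ⟨-k, by simp⟩
  · rintro x ⟨k, rfl⟩
    exact ⟨-k, by simp⟩

lemma gd_lt {v w : ℤ × ℤ} (hv : v ≠ 0) (h : zmultiples v < zmultiples w) :
    w ≠ 0 ∧ Om (Int.gcd w.1 w.2) < Om (Int.gcd v.1 v.2) := by
  obtain ⟨k, hk⟩ : v ∈ zmultiples w := h.le (mem_zmultiples v)
  replace hk : k • w = v := hk
  have hw : w ≠ 0 := by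
    rintro rfl
    exact hv (by rw [← hk, smul_zero])
  have hk0 : k ≠ 0 := by
    rintro rfl
    exact hv (by rw [← hk, zero_smul])
  have hk1 : k.natAbs ≠ 1 := by
    intro h1
    have : k = 1 ∨ k = -1 := by rcases Int.natAbs_eq k with h' | h' <;> omega
    rcases this with rfl | rfl
    · exact h.ne (by rw [← hk, one_smul])
    · refine h.ne ?_
      rw [← hk, neg_one_smul]
      exact zmultiples_neg w
  have hgw : Int.gcd w.1 w.2 ≠ 0 := by
    rw [ne_eq, Int.gcd_eq_zero_iff]
    intro ⟨h1, h2⟩; exact hw (Prod.ext h1 h2)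
  have hgv : Int.gcd v.1 v.2 = k.natAbs * Int.gcd w.1 w.2 := by
    rw [← hk, smul_coords]
    exact Int.gcd_mul_left k w.1 w.2
  constructor
  · exact hw
  · rw [hgv, Om_mul (Int.natAbs_ne_zero.mpr hk0) hgw]
    have := Om_pos (a := k.natAbs) (by omega)
    omega

lemma rank_le_rank1 : ∀ n : ℕ, ∀ v : ℤ × ℤ, v ≠ 0 → Om (Int.gcd v.1 v.2) < n →
    rk (zmultiples v) ≤ Ordinal.omega0 + (Om (Int.gcd v.1 v.2) : Ordinal) := by
  intro n
  induction n with
  | zero => intro v _ h; omega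
  | succ n ih =>
    intro v hv hn
    apply rank_le_of
    intro M hM
    rcases classify M with rfl | hidx | ⟨w, hw, rfl⟩
    · exact absurd hM (not_lt_bot)
    · calc rk M ≤ (Om M.index : Ordinal) := rank_le_index (Om M.index + 1) M hidx (by omega)
        _ < Ordinal.omega0 := Ordinal.nat_lt_omega0 _
        _ ≤ Ordinal.omega0 + (Om (Int.gcd v.1 v.2) : Ordinal) := le_self_add
    · obtain ⟨hw0, hlt⟩ := gd_lt hv hM
      calc rk (zmultiples w)
          ≤ Ordinal.omega0 + (Om (Int.gcd w.1 w.2) : Ordinal) := ih w hw0 (by omega)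
        _ < Ordinal.omega0 + (Om (Int.gcd v.1 v.2) : Ordinal) := by
            exact (add_lt_add_iff_left _).2 (by exact_mod_cast hlt)

lemma rank_lt_of_ne_bot {N : AddSubgroup (ℤ × ℤ)} (h : N ≠ ⊥) :
    rk N < Ordinal.omega0 + Ordinal.omega0 := by
  rcases classify N with rfl | hidx | ⟨v, hv, rfl⟩
  · exact absurd rfl h
  · calc rk N ≤ (Om N.index : Ordinal) := rank_le_index (Om N.index + 1) N hidx (by omega)
      _ < Ordinal.omega0 := Ordinal.nat_lt_omega0 _
      _ ≤ Ordinal.omega0 + Ordinal.omega0 := le_self_add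
  · calc rk (zmultiples v)
        ≤ Ordinal.omega0 + (Om (Int.gcd v.1 v.2) : Ordinal) :=
          rank_le_rank1 (Om (Int.gcd v.1 v.2) + 1) v hv (by omega)
      _ < Ordinal.omega0 + Ordinal.omega0 :=
          (add_lt_add_iff_left _).2 (Ordinal.nat_lt_omega0 _)

lemma rank_bot_le : rk (⊥ : AddSubgroup (ℤ × ℤ)) ≤ Ordinal.omega0 + Ordinal.omega0 :=
  rank_le_of fun M hM => rank_lt_of_ne_bot hM.ne'

/-- the chain of finite-index subgroups -/
def Hm (m : ℕ) : AddSubgroup (ℤ × ℤ) := (⊤ : AddSubgroup ℤ).prod (zmultiples (2 ^ m : ℤ))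

lemma pow_not_dvd {m : ℕ} : ¬ ((2 : ℤ) ^ (m + 1) ∣ 2 ^ m) := by
  intro h
  have h1 : (0 : ℤ) < 2 ^ m := by positivity
  have h2 := Int.le_of_dvd h1 h
  rw [pow_succ] at h2
  linarith

lemma Hm_lt (m : ℕ) : Hm (m + 1) < Hm m := by
  rw [SetLike.lt_iff_le_and_exists]
  constructor
  · rintro ⟨x, y⟩ hxy
    rw [Hm, AddSubgroup.mem_prod] at hxy ⊢
    refine ⟨trivial, ?_⟩
    rw [Int.mem_zmultiples_iff] at hxy ⊢
    exact dvd_trans (pow_dvd_pow 2 (Nat.le_succ m)) hxy.2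
  · refine ⟨((0 : ℤ), (2 : ℤ) ^ m), ?_, ?_⟩
    · rw [Hm, AddSubgroup.mem_prod]
      exact ⟨trivial, Int.mem_zmultiples_iff.mpr dvd_rfl⟩
    · rw [Hm, AddSubgroup.mem_prod]
      rintro ⟨-, h2⟩
      exact pow_not_dvd (Int.mem_zmultiples_iff.mp h2)

lemma le_rank_Hm (m : ℕ) : (m : Ordinal) ≤ rk (Hm m) := by
  induction m with
  | zero => simp
  | succ m ih =>
    have hlt : rk (Hm m) < rk (Hm (m + 1)) :=
      IsWellFounded.rank_lt_of_rel (Hm_lt m)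
    have : (m : Ordinal) < rk (Hm (m + 1)) := lt_of_le_of_lt ih hlt
    rw [Nat.cast_succ, Ordinal.add_one_eq_succ]
    exact Order.succ_le_of_lt this

lemma omega_le_rank_L : Ordinal.omega0 ≤ rk (zmultiples ((1, 0) : ℤ × ℤ)) := by
  rw [Ordinal.omega0_le]
  intro n
  have hle : zmultiples ((1, 0) : ℤ × ℤ) < Hm n := by
    rw [SetLike.lt_iff_le_and_exists]
    constructor
    · apply AddSubgroup.zmultiples_le_of_mem
      rw [Hm, AddSubgroup.mem_prod]
      exact ⟨trivial, Int.mem_zmultiples_iff.mpr (dvd_zero _)⟩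
    · refine ⟨((0 : ℤ), (2 : ℤ) ^ n), ?_, ?_⟩
      · rw [Hm, AddSubgroup.mem_prod]
        exact ⟨trivial, Int.mem_zmultiples_iff.mpr dvd_rfl⟩
      · rintro ⟨k, hk⟩
        replace hk : k • ((1, 0) : ℤ × ℤ) = (0, 2 ^ n) := hk
        rw [smul_coords] at hk
        have h2 := congrArg Prod.snd hk
        simp at h2
        have : (0:ℤ) < 2 ^ n := by positivity
        omega
  have : rk (Hm n) < rk (zmultiples ((1, 0) : ℤ × ℤ)) :=
    IsWellFounded.rank_lt_of_rel hle
  exact le_of_lt (lt_of_le_of_lt (le_rank_Hm n) this)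

lemma le_rank_chain (n : ℕ) :
    Ordinal.omega0 + (n : Ordinal) ≤ rk (zmultiples ((2 ^ n, 0) : ℤ × ℤ)) := by
  induction n with
  | zero => simpa using omega_le_rank_L
  | succ n ih =>
    have hlt : zmultiples ((2 ^ (n + 1), 0) : ℤ × ℤ) < zmultiples ((2 ^ n, 0) : ℤ × ℤ) := by
      rw [SetLike.lt_iff_le_and_exists]
      constructor
      · apply AddSubgroup.zmultiples_le_of_mem
        refine ⟨2, ?_⟩
        show (2 : ℤ) • ((2 ^ n, 0) : ℤ × ℤ) = (2 ^ (n + 1), 0)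
        rw [smul_coords]
        exact Prod.ext (by rw [pow_succ]; ring) (by ring)
      · refine ⟨((2 : ℤ) ^ n, (0 : ℤ)), mem_zmultiples _, ?_⟩
        rintro ⟨k, hk⟩
        replace hk : k • ((2 ^ (n + 1), 0) : ℤ × ℤ) = (2 ^ n, 0) := hk
        rw [smul_coords] at hk
        have h1 := congrArg Prod.fst hk
        simp at h1
        exact pow_not_dvd ⟨k, by linarith⟩
    have : rk (zmultiples ((2 ^ n, 0) : ℤ × ℤ)) < rk (zmultiples ((2 ^ (n + 1), 0) : ℤ × ℤ)) :=
      IsWellFounded.rank_lt_of_rel hlt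
    have h2 : Ordinal.omega0 + (n : Ordinal) < rk (zmultiples ((2 ^ (n + 1), 0) : ℤ × ℤ)) :=
      lt_of_le_of_lt ih this
    rw [Nat.cast_succ, ← add_assoc, Ordinal.add_one_eq_succ]
    exact Order.succ_le_of_lt h2

lemma le_rank_bot : Ordinal.omega0 + Ordinal.omega0 ≤ rk (⊥ : AddSubgroup (ℤ × ℤ)) := by
  rw [Ordinal.add_le_iff_of_isSuccLimit Ordinal.isSuccLimit_omega0]
  intro b hb
  obtain ⟨n, rfl⟩ := Ordinal.lt_omega0.mp hb
  have hbot : (⊥ : AddSubgroup (ℤ × ℤ)) < zmultiples ((2 ^ n, 0) : ℤ × ℤ) := by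
    rw [bot_lt_iff_ne_bot, ne_eq, AddSubgroup.zmultiples_eq_bot]
    intro h
    have h2 : ((2 : ℤ) ^ n) ≠ 0 := by positivity
    exact h2 (by simpa using congrArg Prod.fst h)
  have : rk (zmultiples ((2 ^ n, 0) : ℤ × ℤ)) < rk (⊥ : AddSubgroup (ℤ × ℤ)) :=
    IsWellFounded.rank_lt_of_rel hbot
  exact le_of_lt (lt_of_le_of_lt (le_rank_chain n) this)

lemma rank_bot : rk (⊥ : AddSubgroup (ℤ × ℤ)) = Ordinal.omega0 + Ordinal.omega0 :=
  le_antisymm rank_bot_le le_rank_bot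


end MQZ

/-- The ordinal rank of the lattice of marked quotients of `(ℤ², ((1,0),(0,1)))` is `ω·2 + 1`.
Here a marked quotient is identified with its kernel, a subgroup `N` of `ℤ²`; `N` lies below
`M` in the marked-quotient order iff `N ⊋ M`, i.e. iff `N > M`, and the rank of the poset is
`sup { rank N + 1 }`. -/
theorem rank_markedQuotients_ZxZ :
    (⨆ N : AddSubgroup (ℤ × ℤ),
        Order.succ (IsWellFounded.rank (α := AddSubgroup (ℤ × ℤ)) (· > ·) N)) =
      Ordinal.omega0 * 2 + 1 := by
  have key : (⨆ N : AddSubgroup (ℤ × ℤ),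
      Order.succ (IsWellFounded.rank (α := AddSubgroup (ℤ × ℤ)) (· > ·) N)) =
      Order.succ (IsWellFounded.rank (α := AddSubgroup (ℤ × ℤ)) (· > ·) ⊥) := by
    apply le_antisymm
    · apply Ordinal.iSup_le
      intro N
      apply Order.succ_le_succ
      rcases eq_or_ne N ⊥ with rfl | h
      · exact le_rfl
      · exact (IsWellFounded.rank_lt_of_rel (r := (· > ·))
          (show N > ⊥ from bot_lt_iff_ne_bot.mpr h)).le
    · exact Ordinal.le_iSup _ ⊥
  rw [key, MQZ.rank_bot]
  have h2 : Ordinal.omega0 * 2 = Ordinal.omega0 + Ordinal.omega0 := by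
    rw [show (2 : Ordinal) = 1 + 1 from one_add_one_eq_two.symm, mul_add, mul_one]
  rw [h2, ← Ordinal.add_one_eq_succ]
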